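/- arXiv:2406.14165 — 8 statements merged into one kernel-verified Lean document; each statement's English description precedes it below -/
import Mathlib

section
/- Makespan approximation guarantee of weighted greedy job assignment (robustness of AllocationScaledGreedy): let t ∈ ℝ_{≥0}^{n×m} be job processing times, let r ∈ ℝ^{n×m} with 1 ≤ r_{ij} ≤ n/β for all i,j where 1 ≤ β ≤ n, and let the assignment a give each job j to a machine i_j minimizing r_{ij}·t_{ij} over i. Then the makespan of a is at most (n²/β) times the optimal makespan: max_i Σ_{j : i_j = i} t_{ij} ≤ (n²/β) · min over assignments σ of max_i Σ_{j : σ(j) = i} t_{ij}. -/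
/-- Robustness of AllocationScaledGreedy: the weighted greedy assignment has makespan
    at most (n²/β) times the optimal makespan. -/
theorem stmt_7 (n m : ℕ) (hne : (Finset.univ : Finset (Fin n)).Nonempty)
    (t : Fin n → Fin m → ℝ) (ht : ∀ i j, 0 ≤ t i j)
    (β : ℝ) (hβ1 : 1 ≤ β) (hβn : β ≤ n)
    (r : Fin n → Fin m → ℝ) (hr : ∀ i j, 1 ≤ r i j ∧ r i j ≤ n / β)
    (ij : Fin m → Fin n) (hmin : ∀ j i, r (ij j) j * t (ij j) j ≤ r i j * t i j)
    (σ : Fin m → Fin n) :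
    Finset.univ.sup' hne (fun i => ∑ j ∈ Finset.univ.filter (fun j => ij j = i), t i j)
      ≤ ((n : ℝ) ^ 2 / β) *
        Finset.univ.sup' hne (fun i => ∑ j ∈ Finset.univ.filter (fun j => σ j = i), t i j) := by
  have hβ0 : (0:ℝ) < β := lt_of_lt_of_le one_pos hβ1
  set M := Finset.univ.sup' hne (fun i => ∑ j ∈ Finset.univ.filter (fun j => σ j = i), t i j)
    with hM
  have hM0 : 0 ≤ M := by
    obtain ⟨i, hi⟩ := hne
    refine le_trans ?_ (Finset.le_sup' (fun i => ∑ j ∈ Finset.univ.filter (fun j => σ j = i), t i j) (Finset.mem_univ i))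
    exact Finset.sum_nonneg fun j _ => ht i j
  -- total work of σ bounded by n * M
  have htotal : ∑ j : Fin m, t (σ j) j ≤ (n : ℝ) * M := by
    have h1 : ∑ j : Fin m, t (σ j) j
        = ∑ i : Fin n, ∑ j ∈ Finset.univ.filter (fun j => σ j = i), t i j := by
      rw [← Finset.sum_fiberwise Finset.univ σ (fun j => t (σ j) j)]
      refine Finset.sum_congr rfl fun i _ => Finset.sum_congr rfl fun j hj => ?_
      simp only [Finset.mem_filter] at hj
      rw [hj.2]
    rw [h1]
    calc ∑ i : Fin n, ∑ j ∈ Finset.univ.filter (fun j => σ j = i), t i j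
        ≤ ∑ _i : Fin n, M :=
          Finset.sum_le_sum fun i _ => Finset.le_sup' (fun i => ∑ j ∈ Finset.univ.filter (fun j => σ j = i), t i j) (Finset.mem_univ i)
      _ = (n : ℝ) * M := by simp [mul_comm]
  refine Finset.sup'_le _ _ fun i _ => ?_
  have hstep : ∀ j ∈ Finset.univ.filter (fun j => ij j = i),
      t i j ≤ ((n : ℝ) / β) * t (σ j) j := by
    intro j hj
    simp only [Finset.mem_filter] at hj
    have h1 : t i j ≤ r (ij j) j * t (ij j) j := by
      rw [← hj.2]
      nlinarith [(hr (ij j) j).1, ht (ij j) j]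
    have h2 : r (ij j) j * t (ij j) j ≤ r (σ j) j * t (σ j) j := hmin j (σ j)
    have h3 : r (σ j) j * t (σ j) j ≤ ((n : ℝ) / β) * t (σ j) j :=
      mul_le_mul_of_nonneg_right (hr (σ j) j).2 (ht (σ j) j)
    linarith
  calc ∑ j ∈ Finset.univ.filter (fun j => ij j = i), t i j
      ≤ ∑ j ∈ Finset.univ.filter (fun j => ij j = i), ((n : ℝ) / β) * t (σ j) j :=
        Finset.sum_le_sum hstep
    _ ≤ ∑ j : Fin m, ((n : ℝ) / β) * t (σ j) j := by
        refine Finset.sum_le_sum_of_subset_of_nonneg (Finset.filter_subset _ _) fun j _ _ => ?_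
        exact mul_nonneg (div_nonneg (Nat.cast_nonneg n) hβ0.le) (ht (σ j) j)
    _ = ((n : ℝ) / β) * ∑ j : Fin m, t (σ j) j := by rw [Finset.mul_sum]
    _ ≤ ((n : ℝ) / β) * ((n : ℝ) * M) :=
        mul_le_mul_of_nonneg_left htotal (div_nonneg (Nat.cast_nonneg n) hβ0.le)
    _ = ((n : ℝ) ^ 2 / β) * M := by ring
end

section
/- Consistency of AllocationScaledGreedy: let t ∈ ℝ_{≥0}^{n×m}, let â : [m] → [n] be an assignment achieving the minimum makespan OPT, and set r_{ij} = 1 if â(j) = i and r_{ij} = n/β otherwise, where 1 ≤ β ≤ n. If each job j is assigned to some i_j ∈ argmin_i r_{ij} t_{ij}, then the resulting makespan is at most (((n−1)/n)·β + 1)·OPT. -/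
/-- Consistency of AllocationScaledGreedy: if the recommendation â is an optimal
    assignment, the mechanism's makespan is at most ((n−1)/n·β + 1)·OPT. -/
theorem stmt_8 (n m : ℕ) (hne : (Finset.univ : Finset (Fin n)).Nonempty)
    (t : Fin n → Fin m → ℝ) (ht : ∀ i j, 0 ≤ t i j)
    (β : ℝ) (hβ1 : 1 ≤ β) (hβn : β ≤ n)
    (ahat : Fin m → Fin n)
    (hopt : ∀ σ : Fin m → Fin n,
      Finset.univ.sup' hne (fun i => ∑ j ∈ Finset.univ.filter (fun j => ahat j = i), t i j)
        ≤ Finset.univ.sup' hne (fun i => ∑ j ∈ Finset.univ.filter (fun j => σ j = i), t i j))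
    (r : Fin n → Fin m → ℝ)
    (hr : ∀ i j, r i j = if ahat j = i then 1 else (n : ℝ) / β)
    (ij : Fin m → Fin n) (hmin : ∀ j i, r (ij j) j * t (ij j) j ≤ r i j * t i j) :
    Finset.univ.sup' hne (fun i => ∑ j ∈ Finset.univ.filter (fun j => ij j = i), t i j)
      ≤ (((n : ℝ) - 1) / n * β + 1) *
        Finset.univ.sup' hne (fun i => ∑ j ∈ Finset.univ.filter (fun j => ahat j = i), t i j) := by
  classical
  have hn0 : 0 < n := by
    obtain ⟨i, _⟩ := hne; exact i.pos
  have hnR : (0:ℝ) < n := by exact_mod_cast hn0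
  have hβ0 : (0:ℝ) < β := lt_of_lt_of_le one_pos hβ1
  set L : Fin n → ℝ := fun i => ∑ j ∈ Finset.univ.filter (fun j => ahat j = i), t i j
    with hL
  set OPT := Finset.univ.sup' hne L with hOPTdef
  have hOPT : ∀ k, L k ≤ OPT := fun k => Finset.le_sup' L (Finset.mem_univ k)
  have hOPT0 : 0 ≤ OPT := by
    obtain ⟨i0, _⟩ := hne
    exact le_trans (Finset.sum_nonneg fun j _ => ht i0 j) (hOPT i0)
  apply Finset.sup'_le
  intro i _
  -- per-job bound
  have hjob : ∀ j, ij j = i → ahat j ≠ i → t i j ≤ β / n * t (ahat j) j := by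
    intro j hij hne'
    have h := hmin j (ahat j)
    rw [hij] at h
    rw [hr i j, hr (ahat j) j, if_neg hne', if_pos rfl, one_mul] at h
    have : (n:ℝ)/β * t i j ≤ t (ahat j) j := h
    rw [div_mul_eq_mul_div, div_le_iff₀ hβ0] at this
    rw [div_mul_eq_mul_div, le_div_iff₀ hnR]
    linarith
  -- split the load
  have hsplit :
      ∑ j ∈ Finset.univ.filter (fun j => ij j = i), t i j
        = ∑ j ∈ (Finset.univ.filter (fun j => ij j = i)).filter (fun j => ahat j = i), t i j
          + ∑ j ∈ (Finset.univ.filter (fun j => ij j = i)).filter (fun j => ¬ ahat j = i), t i j :=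
    (Finset.sum_filter_add_sum_filter_not _ _ _).symm
  have h1 : ∑ j ∈ (Finset.univ.filter (fun j => ij j = i)).filter (fun j => ahat j = i), t i j
      ≤ OPT := by
    refine le_trans (Finset.sum_le_sum_of_subset_of_nonneg ?_ fun j _ _ => ht i j) (hOPT i)
    intro j hj
    simp only [Finset.mem_filter, Finset.mem_univ, true_and] at hj ⊢
    exact hj.2
  have h2 : ∑ j ∈ (Finset.univ.filter (fun j => ij j = i)).filter (fun j => ¬ ahat j = i), t i j
      ≤ β / n * ((n - 1) * OPT) := by
    have step1 : ∑ j ∈ (Finset.univ.filter (fun j => ij j = i)).filter (fun j => ¬ ahat j = i), t i j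
        ≤ ∑ j ∈ (Finset.univ.filter (fun j => ij j = i)).filter (fun j => ¬ ahat j = i),
            β / n * t (ahat j) j := by
      refine Finset.sum_le_sum fun j hj => ?_
      simp only [Finset.mem_filter, Finset.mem_univ, true_and] at hj
      exact hjob j hj.1 hj.2
    have step2 : ∑ j ∈ (Finset.univ.filter (fun j => ij j = i)).filter (fun j => ¬ ahat j = i),
          β / n * t (ahat j) j
        ≤ ∑ j ∈ Finset.univ.filter (fun j => ¬ ahat j = i), β / n * t (ahat j) j := by
      refine Finset.sum_le_sum_of_subset_of_nonneg ?_
        (fun j _ _ => mul_nonneg (div_nonneg hβ0.le hnR.le) (ht _ j))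
      intro j hj
      simp only [Finset.mem_filter, Finset.mem_univ, true_and] at hj ⊢
      exact hj.2
    have fiber : ∑ j ∈ Finset.univ.filter (fun j => ¬ ahat j = i), t (ahat j) j
        = ∑ k ∈ Finset.univ.erase i, L k := by
      rw [← Finset.sum_fiberwise_of_maps_to (g := ahat)
        (t := Finset.univ.erase i)
        (fun j hj => by
          simp only [Finset.mem_filter, Finset.mem_univ, true_and] at hj
          exact Finset.mem_erase.2 ⟨hj, Finset.mem_univ _⟩)]
      refine Finset.sum_congr rfl fun k hk => ?_
      have hki : k ≠ i := (Finset.mem_erase.1 hk).1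
      rw [Finset.filter_filter]
      refine Finset.sum_congr ?_ fun j hj => ?_
      · refine Finset.filter_congr fun j _ => ?_
        constructor
        · exact fun h => h.2
        · exact fun h => ⟨h ▸ hki, h⟩
      · simp only [Finset.mem_filter] at hj
        rw [hj.2]
    have card_bound : ∑ k ∈ Finset.univ.erase i, L k ≤ (n - 1) * OPT := by
      calc ∑ k ∈ Finset.univ.erase i, L k
          ≤ (Finset.univ.erase i).card • OPT :=
            Finset.sum_le_card_nsmul _ _ _ fun k _ => hOPT k
        _ = ((n - 1 : ℕ) : ℝ) * OPT := by
            rw [Finset.card_erase_of_mem (Finset.mem_univ i), Finset.card_univ,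
              Fintype.card_fin, nsmul_eq_mul]
        _ = (n - 1) * OPT := by
            rw [Nat.cast_sub hn0, Nat.cast_one]
    calc ∑ j ∈ (Finset.univ.filter (fun j => ij j = i)).filter (fun j => ¬ ahat j = i), t i j
        ≤ ∑ j ∈ Finset.univ.filter (fun j => ¬ ahat j = i), β / n * t (ahat j) j :=
          le_trans step1 step2
      _ = β / n * ∑ j ∈ Finset.univ.filter (fun j => ¬ ahat j = i), t (ahat j) j := by
          rw [Finset.mul_sum]
      _ ≤ β / n * ((n - 1) * OPT) := by
          rw [fiber]
          exact mul_le_mul_of_nonneg_left card_bound (div_nonneg hβ0.le hnR.le)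
    -- done
  have final : ∑ j ∈ Finset.univ.filter (fun j => ij j = i), t i j
      ≤ OPT + β / n * ((n - 1) * OPT) := by
    rw [hsplit]; exact add_le_add h1 h2
  refine le_trans final ?_
  have : β / n * ((n - 1) * OPT) = (n - 1) / n * β * OPT := by
    field_simp
  rw [this]; ring_nf; linarith
end

section
/- Smoothness of AllocationScaledGreedy in terms of recommendation quality: with the setup of the AllocationScaledGreedy mechanism (weights r_{ij} = 1 if â(j)=i, else n/β, and each job assigned to a minimizer of r_{ij}t_{ij}), the mechanism's makespan is at most (β+1)·C(t, â), where C(t, â) is the makespan of the recommended assignment â. Consequently the approximation ratio is at most (β+1)·ρ̂ where ρ̂ = C(t, â)/OPT. -/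
/-- Smoothness of AllocationScaledGreedy: the mechanism's makespan is at most
    (β+1)·C(t,â), hence its approximation ratio is at most (β+1)·ρ̂. -/
theorem stmt_9 (n m : ℕ) (hne : (Finset.univ : Finset (Fin n)).Nonempty)
    (t : Fin n → Fin m → ℝ) (ht : ∀ i j, 0 ≤ t i j)
    (β : ℝ) (hβ1 : 1 ≤ β) (hβn : β ≤ n)
    (ahat : Fin m → Fin n)
    (r : Fin n → Fin m → ℝ)
    (hr : ∀ i j, r i j = if ahat j = i then 1 else (n : ℝ) / β)
    (ij : Fin m → Fin n) (hmin : ∀ j i, r (ij j) j * t (ij j) j ≤ r i j * t i j)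
    (σstar : Fin m → Fin n)
    (hopt : ∀ σ : Fin m → Fin n,
      Finset.univ.sup' hne (fun i => ∑ j ∈ Finset.univ.filter (fun j => σstar j = i), t i j)
        ≤ Finset.univ.sup' hne (fun i => ∑ j ∈ Finset.univ.filter (fun j => σ j = i), t i j))
    (OPT : ℝ)
    (hOPT : OPT = Finset.univ.sup' hne
      (fun i => ∑ j ∈ Finset.univ.filter (fun j => σstar j = i), t i j))
    (hpos : 0 < OPT)
    (ρ : ℝ)
    (hρ : ρ = (Finset.univ.sup' hne
      (fun i => ∑ j ∈ Finset.univ.filter (fun j => ahat j = i), t i j)) / OPT) :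
    Finset.univ.sup' hne (fun i => ∑ j ∈ Finset.univ.filter (fun j => ij j = i), t i j)
      ≤ (β + 1) *
        Finset.univ.sup' hne (fun i => ∑ j ∈ Finset.univ.filter (fun j => ahat j = i), t i j) ∧
    Finset.univ.sup' hne (fun i => ∑ j ∈ Finset.univ.filter (fun j => ij j = i), t i j) / OPT
      ≤ (β + 1) * ρ := by
  have hβpos : (0:ℝ) < β := lt_of_lt_of_le one_pos hβ1
  have hnpos : (0:ℝ) < n := lt_of_lt_of_le hβpos hβn
  set Chat := Finset.univ.sup' hne
      (fun i => ∑ j ∈ Finset.univ.filter (fun j => ahat j = i), t i j) with hChat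
  -- each recommended load is ≤ Chat
  have hload : ∀ i : Fin n,
      ∑ j ∈ Finset.univ.filter (fun j => ahat j = i), t i j ≤ Chat := fun i =>
    Finset.le_sup' (fun i => ∑ j ∈ Finset.univ.filter (fun j => ahat j = i), t i j)
      (Finset.mem_univ i)
  -- key per-machine bound
  have key : ∀ i : Fin n,
      ∑ j ∈ Finset.univ.filter (fun j => ij j = i), t i j ≤ (β + 1) * Chat := by
    intro i
    have hsplit :
        ∑ j ∈ Finset.univ.filter (fun j => ij j = i), t i j
          = (∑ j ∈ (Finset.univ.filter (fun j => ij j = i)).filter (fun j => ahat j = i), t i j)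
          + ∑ j ∈ (Finset.univ.filter (fun j => ij j = i)).filter (fun j => ¬ ahat j = i), t i j :=
      (Finset.sum_filter_add_sum_filter_not _ _ _).symm
    -- first part ≤ Chat
    have h1 : ∑ j ∈ (Finset.univ.filter (fun j => ij j = i)).filter (fun j => ahat j = i), t i j
        ≤ Chat := by
      refine le_trans (Finset.sum_le_sum_of_subset_of_nonneg ?_ (fun j _ _ => ht i j)) (hload i)
      intro j hj
      simp only [Finset.mem_filter, Finset.mem_univ, true_and] at hj ⊢
      exact hj.2
    -- second part: each job bounded by (β/n) t(ahat j) j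
    have h2 : ∑ j ∈ (Finset.univ.filter (fun j => ij j = i)).filter (fun j => ¬ ahat j = i), t i j
        ≤ β * Chat := by
      have hjb : ∀ j ∈ (Finset.univ.filter (fun j => ij j = i)).filter (fun j => ¬ ahat j = i),
          t i j ≤ (β / n) * t (ahat j) j := by
        intro j hj
        simp only [Finset.mem_filter, Finset.mem_univ, true_and] at hj
        obtain ⟨hij, hne'⟩ := hj
        have hm := hmin j (ahat j)
        rw [hij] at hm
        rw [hr i j, hr (ahat j) j] at hm
        simp only [if_neg hne', if_true, eq_self_iff_true, one_mul] at hm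
        rw [div_mul_eq_mul_div, div_le_iff₀ hβpos] at hm
        rw [div_mul_eq_mul_div, le_div_iff₀ hnpos]
        linarith
      calc ∑ j ∈ (Finset.univ.filter (fun j => ij j = i)).filter (fun j => ¬ ahat j = i), t i j
          ≤ ∑ j ∈ (Finset.univ.filter (fun j => ij j = i)).filter (fun j => ¬ ahat j = i),
              (β / n) * t (ahat j) j := Finset.sum_le_sum hjb
        _ ≤ ∑ j ∈ Finset.univ, (β / n) * t (ahat j) j := by
            refine Finset.sum_le_sum_of_subset_of_nonneg (Finset.subset_univ _) ?_
            intro j _ _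
            exact mul_nonneg (le_of_lt (div_pos hβpos hnpos)) (ht _ _)
        _ = (β / n) * ∑ j ∈ Finset.univ, t (ahat j) j := by rw [Finset.mul_sum]
        _ ≤ (β / n) * ((n:ℝ) * Chat) := by
            refine mul_le_mul_of_nonneg_left ?_ (le_of_lt (div_pos hβpos hnpos))
            have htot : ∑ j ∈ Finset.univ, t (ahat j) j
                = ∑ i' ∈ Finset.univ, ∑ j ∈ Finset.univ.filter (fun j => ahat j = i'), t (ahat j) j := by
              rw [Finset.sum_fiberwise_of_maps_to (fun j _ => Finset.mem_univ (ahat j))]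
            rw [htot]
            have : ∀ i' : Fin n,
                ∑ j ∈ Finset.univ.filter (fun j => ahat j = i'), t (ahat j) j ≤ Chat := by
              intro i'
              have : ∑ j ∈ Finset.univ.filter (fun j => ahat j = i'), t (ahat j) j
                  = ∑ j ∈ Finset.univ.filter (fun j => ahat j = i'), t i' j := by
                refine Finset.sum_congr rfl fun j hj => ?_
                simp only [Finset.mem_filter] at hj
                rw [hj.2]
              rw [this]; exact hload i'
            calc ∑ i' ∈ Finset.univ, ∑ j ∈ Finset.univ.filter (fun j => ahat j = i'), t (ahat j) j
                ≤ ∑ _i' ∈ (Finset.univ : Finset (Fin n)), Chat := Finset.sum_le_sum fun i' _ => this i'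
              _ = (n:ℝ) * Chat := by simp [Finset.sum_const, mul_comm]
        _ = β * Chat := by field_simp
    rw [hsplit]
    calc _ ≤ Chat + β * Chat := add_le_add h1 h2
      _ = (β + 1) * Chat := by ring
  have main : Finset.univ.sup' hne (fun i => ∑ j ∈ Finset.univ.filter (fun j => ij j = i), t i j)
      ≤ (β + 1) * Chat := Finset.sup'_le _ _ fun i _ => key i
  refine ⟨main, ?_⟩
  rw [hρ, ← mul_div_assoc]
  exact (div_le_div_iff_of_pos_right hpos).mpr main
end

section
/- Alternative bound for AllocationScaledGreedy: with weights r_{ij} = 1 if â(j)=i and r_{ij} = n/β otherwise (β ∈ [1,n]), and each job j assigned to a minimizer i_j of r_{ij}t_{ij}, the resulting makespan is at most n·OPT + C(t, â), i.e. at most (n + ρ̂)·OPT where ρ̂ = C(t, â)/OPT. -/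
/-- Alternative bound for AllocationScaledGreedy: the mechanism's makespan is at most
    n·OPT + C(t,â), i.e. at most (n + ρ̂)·OPT. -/
theorem stmt_10 (n m : ℕ) (hne : (Finset.univ : Finset (Fin n)).Nonempty)
    (t : Fin n → Fin m → ℝ) (ht : ∀ i j, 0 ≤ t i j)
    (β : ℝ) (hβ1 : 1 ≤ β) (hβn : β ≤ n)
    (ahat : Fin m → Fin n)
    (r : Fin n → Fin m → ℝ)
    (hr : ∀ i j, r i j = if ahat j = i then 1 else (n : ℝ) / β)
    (ij : Fin m → Fin n) (hmin : ∀ j i, r (ij j) j * t (ij j) j ≤ r i j * t i j)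
    (σstar : Fin m → Fin n)
    (hopt : ∀ σ : Fin m → Fin n,
      Finset.univ.sup' hne (fun i => ∑ j ∈ Finset.univ.filter (fun j => σstar j = i), t i j)
        ≤ Finset.univ.sup' hne (fun i => ∑ j ∈ Finset.univ.filter (fun j => σ j = i), t i j))
    (OPT : ℝ)
    (hOPT : OPT = Finset.univ.sup' hne
      (fun i => ∑ j ∈ Finset.univ.filter (fun j => σstar j = i), t i j))
    (hpos : 0 < OPT) :
    Finset.univ.sup' hne (fun i => ∑ j ∈ Finset.univ.filter (fun j => ij j = i), t i j)
      ≤ n * OPT +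
        Finset.univ.sup' hne (fun i => ∑ j ∈ Finset.univ.filter (fun j => ahat j = i), t i j) := by
  have hβpos : (0:ℝ) < β := lt_of_lt_of_le one_pos hβ1
  have hnb : (1:ℝ) ≤ (n:ℝ)/β := (one_le_div hβpos).2 hβn
  have hnbpos : (0:ℝ) < (n:ℝ)/β := lt_of_lt_of_le one_pos hnb
  apply Finset.sup'_le
  intro i _
  set s := Finset.univ.filter (fun j => ij j = i) with hs
  have hsplit := Finset.sum_filter_add_sum_filter_not s (fun j => ahat j = i) (fun j => t i j)
  -- Bound the part where ahat j = i
  have hA : ∑ j ∈ s.filter (fun j => ahat j = i), t i j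
      ≤ Finset.univ.sup' hne (fun i => ∑ j ∈ Finset.univ.filter (fun j => ahat j = i), t i j) := by
    refine le_trans (Finset.sum_le_sum_of_subset_of_nonneg ?_ (fun j _ _ => ht i j))
      (Finset.le_sup' (f := fun i => ∑ j ∈ Finset.univ.filter (fun j => ahat j = i), t i j)
        (Finset.mem_univ i))
    intro j hj
    simp only [hs, Finset.mem_filter, Finset.mem_univ, true_and] at hj ⊢
    exact hj.2
  -- Bound the part where ahat j ≠ i
  have hB : ∑ j ∈ s.filter (fun j => ¬ ahat j = i), t i j ≤ n * OPT := by
    have h1 : ∀ j ∈ s.filter (fun j => ¬ ahat j = i), t i j ≤ t (σstar j) j := by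
      intro j hj
      simp only [hs, Finset.mem_filter, Finset.mem_univ, true_and] at hj
      have hm := hmin j (σstar j)
      rw [hj.1] at hm
      have hri : r i j = (n:ℝ)/β := by rw [hr]; simp [hj.2]
      have hrs : r (σstar j) j ≤ (n:ℝ)/β := by
        rw [hr]; split
        · exact hnb
        · exact le_rfl
      have hkey : ((n:ℝ)/β) * t i j ≤ ((n:ℝ)/β) * t (σstar j) j := by
        rw [hri] at hm
        exact le_trans hm (mul_le_mul_of_nonneg_right hrs (ht _ j))
      exact le_of_mul_le_mul_left hkey hnbpos
    have h2 : ∑ j ∈ s.filter (fun j => ¬ ahat j = i), t (σstar j) j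
        ≤ ∑ j : Fin m, t (σstar j) j :=
      Finset.sum_le_sum_of_subset_of_nonneg (Finset.subset_univ _)
        (fun j _ _ => ht _ j)
    have h3 : ∑ j : Fin m, t (σstar j) j
        = ∑ i' : Fin n, ∑ j ∈ Finset.univ.filter (fun j => σstar j = i'), t i' j := by
      rw [← Finset.sum_fiberwise Finset.univ σstar (fun j => t (σstar j) j)]
      refine Finset.sum_congr rfl (fun i' _ => Finset.sum_congr rfl ?_)
      intro j hj
      simp only [Finset.mem_filter] at hj
      rw [hj.2]
    have h4 : ∀ i' : Fin n,
        ∑ j ∈ Finset.univ.filter (fun j => σstar j = i'), t i' j ≤ OPT := by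
      intro i'
      rw [hOPT]
      exact Finset.le_sup' (f := fun i => ∑ j ∈ Finset.univ.filter (fun j => σstar j = i), t i j) (Finset.mem_univ i')
    calc ∑ j ∈ s.filter (fun j => ¬ ahat j = i), t i j
        ≤ ∑ j ∈ s.filter (fun j => ¬ ahat j = i), t (σstar j) j := Finset.sum_le_sum h1
      _ ≤ ∑ j : Fin m, t (σstar j) j := h2
      _ = ∑ i' : Fin n, ∑ j ∈ Finset.univ.filter (fun j => σstar j = i'), t i' j := h3
      _ ≤ ∑ _i' : Fin n, OPT := Finset.sum_le_sum (fun i' _ => h4 i')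
      _ = n * OPT := by simp [mul_comm]
  rw [← hsplit, add_comm ((n:ℝ) * OPT)]
  exact add_le_add hA hB
end

section
/- Lower-bound instance for AllocationScaledGreedy: fix n ≥ 2 machines, n−1 jobs, β ∈ [1,n], ρ ∈ (0, n/β], ε ∈ (0, βρ/n). Define t_{ij} = ρ if i = j < n, t_{nj} = βρ/n − ε for all j, and t_{ij} = 1 otherwise. With weights r_{jj} = 1 for j < n and r_{ij} = n/β otherwise, the weighted-greedy assignment (each job j to a minimizer of r_{ij}t_{ij}, with strict inequality forcing machine n) assigns all n−1 jobs to machine n, achieving makespan (n−1)(βρ/n − ε), while the assignment sending job j to machine j+1 cyclically (or any bijection avoiding matches) attains makespan at most max(1, βρ(n−1)/n). -/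
/-- Lower-bound instance for AllocationScaledGreedy: weighted greedy sends all n−1 jobs
    to machine n, with makespan (n−1)(βρ/n − ε), while spreading the jobs
    (job j to machine j+1) achieves makespan at most max(1, βρ(n−1)/n). -/
theorem stmt_11 (n : ℕ) (hn : 2 ≤ n) (hne : (Finset.univ : Finset (Fin n)).Nonempty)
    (β ρ ε : ℝ) (hβ1 : 1 ≤ β) (hβn : β ≤ n)
    (hρ0 : 0 < ρ) (hρn : ρ ≤ n / β) (hε0 : 0 < ε) (hε : ε < β * ρ / n)
    (t r : Fin n → Fin (n - 1) → ℝ)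
    (jm : Fin (n - 1) → Fin n) (hjm : ∀ j : Fin (n - 1), (jm j : ℕ) = (j : ℕ))
    (last : Fin n) (hlast : (last : ℕ) = n - 1)
    (ht1 : ∀ j, t (jm j) j = ρ)
    (ht2 : ∀ j, t last j = β * ρ / n - ε)
    (ht3 : ∀ i j, i ≠ jm j → i ≠ last → t i j = 1)
    (hr1 : ∀ j, r (jm j) j = 1)
    (hr2 : ∀ i j, i ≠ jm j → r i j = n / β) :
    (∀ (j : Fin (n - 1)) (i : Fin n), i ≠ last → r last j * t last j < r i j * t i j) ∧
    Finset.univ.sup' hne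
        (fun i => ∑ j ∈ Finset.univ.filter (fun j : Fin (n - 1) => last = i), t i j)
      = (n - 1) * (β * ρ / n - ε) ∧
    ∀ σ : Fin (n - 1) → Fin n, (∀ j, (σ j : ℕ) = (j : ℕ) + 1) →
      Finset.univ.sup' hne
          (fun i => ∑ j ∈ Finset.univ.filter (fun j : Fin (n - 1) => σ j = i), t i j)
        ≤ max 1 (β * ρ * (n - 1) / n) := by
  have hn2 : (2:ℝ) ≤ n := by exact_mod_cast hn
  have hβ0 : (0:ℝ) < β := lt_of_lt_of_le one_pos hβ1
  have hnpos : (0:ℝ) < n := by linarith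
  have hnβ : (0:ℝ) < n / β := div_pos hnpos hβ0
  have hval : (0:ℝ) < β * ρ / n - ε := by linarith
  have hlastne : ∀ j : Fin (n-1), last ≠ jm j := by
    intro j h
    have := congrArg Fin.val h
    rw [hlast, hjm] at this
    have hj := j.isLt
    omega
  have hid : n / β * (β * ρ / n - ε) = ρ - n / β * ε := by
    field_simp
  refine ⟨?_, ?_, ?_⟩
  · intro j i hi
    rw [hr2 _ _ (hlastne j), ht2, hid]
    by_cases hij : i = jm j
    · rw [hij, hr1, ht1, one_mul]
      nlinarith [mul_pos hnβ hε0]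
    · rw [hr2 _ _ hij, ht3 _ _ hij hi, mul_one]
      nlinarith [mul_pos hnβ hε0]
  · have hsum : (∑ j ∈ Finset.univ.filter (fun j : Fin (n-1) => last = last), t last j)
        = ((n:ℝ) - 1) * (β * ρ / n - ε) := by
      rw [Finset.filter_true_of_mem (fun j _ => rfl),
        Finset.sum_congr rfl (fun j _ => ht2 j),
        Finset.sum_const, Finset.card_univ, Fintype.card_fin, nsmul_eq_mul]
      congr 1
      rw [Nat.cast_sub (by omega : 1 ≤ n)]
      norm_num
    apply le_antisymm
    · apply Finset.sup'_le
      intro i _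
      by_cases hi : i = last
      · subst hi
        exact le_of_eq hsum
      · rw [Finset.filter_false_of_mem (fun j _ => fun h => hi h.symm),
          Finset.sum_empty]
        nlinarith
    · exact le_trans (le_of_eq hsum.symm)
        (Finset.le_sup' (fun i => ∑ j ∈ Finset.univ.filter (fun j : Fin (n-1) => last = i), t i j)
          (Finset.mem_univ last))
  · intro σ hσ
    have hinj : Function.Injective σ := by
      intro a b h
      have := congrArg Fin.val h
      rw [hσ, hσ] at this
      exact Fin.ext (by omega)
    apply Finset.sup'_le
    intro i _
    set M := max 1 (β * ρ * ((n:ℝ) - 1) / n) with hM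
    have hM0 : (0:ℝ) ≤ M := le_trans zero_le_one (le_max_left _ _)
    set S := Finset.univ.filter (fun j : Fin (n-1) => σ j = i) with hS
    have hcard : S.card ≤ 1 := Finset.card_le_one.mpr (by
      intro a ha b hb
      simp only [hS, Finset.mem_filter, Finset.mem_univ, true_and] at ha hb
      exact hinj (ha.trans hb.symm))
    have hterm : ∀ j ∈ S, t i j ≤ M := by
      intro j hj
      simp only [hS, Finset.mem_filter, Finset.mem_univ, true_and] at hj
      by_cases hi : i = last
      · subst hi
        rw [ht2]
        refine le_trans ?_ (le_max_right _ _)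
        have key : β * ρ ≤ β * ρ * ((n:ℝ) - 1) := by nlinarith [mul_pos hβ0 hρ0]
        have : β * ρ / n ≤ β * ρ * ((n:ℝ) - 1) / n := by gcongr
        linarith
      · have hij : i ≠ jm j := by
          intro h
          have := congrArg Fin.val h
          rw [hjm] at this
          have h2 := congrArg Fin.val hj
          rw [hσ] at h2
          omega
        rw [ht3 _ _ hij hi]
        exact le_max_left _ _
    calc (∑ j ∈ S, t i j) ≤ S.card • M := Finset.sum_le_card_nsmul S _ _ hterm
      _ ≤ M := by
          rw [nsmul_eq_mul]
          have hc : (S.card : ℝ) ≤ 1 := by exact_mod_cast hcard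
          nlinarith
end

section
/- Linear lower bound instance for TTC with unit-range valuations: for n ≥ 2 and ε ∈ (0,1), consider agents with t_1 = (1−ε at house 1, 1 at house 2, 0 elsewhere) and, for 2 ≤ i ≤ n, t_i(i) = 1, t_i((i mod n)+1) = ε, 0 elsewhere. The allocation a(1) = 2, a(i) = (i mod n)+1 for i ≥ 2 has welfare 1 + (n−1)ε, while the identity allocation has welfare n − ε; hence the ratio of optimal welfare to W(a) is at least (n − ε)/(1 + (n−1)ε). -/
/-- Linear lower-bound instance for TTC with unit-range valuations (0-indexed): the
    cyclic-shift allocation has welfare 1+(n−1)ε, the identity has welfare n−ε, and the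
    optimal-to-mechanism welfare ratio is at least (n−ε)/(1+(n−1)ε). -/
theorem stmt_15 (n : ℕ) [NeZero n] (hn : 2 ≤ n) (ε : ℝ) (hε0 : 0 < ε) (hε1 : ε < 1)
    (t : Fin n → Fin n → ℝ)
    (h00 : t 0 0 = 1 - ε) (h01 : t 0 1 = 1)
    (h0 : ∀ j : Fin n, 2 ≤ (j : ℕ) → t 0 j = 0)
    (hi : ∀ i : Fin n, i ≠ 0 →
      t i i = 1 ∧ t i (i + 1) = ε ∧ ∀ j : Fin n, j ≠ i → j ≠ i + 1 → t i j = 0)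
    (a : Equiv.Perm (Fin n)) (ha : ∀ i, a i = i + 1) :
    ∑ i, t i (a i) = 1 + (n - 1) * ε ∧
    ∑ i, t i i = n - ε ∧
    ∃ a' : Equiv.Perm (Fin n),
      (n - ε) / (1 + (n - 1) * ε) ≤ (∑ i, t i (a' i)) / (∑ i, t i (a i)) := by
  have hcard : ((Finset.univ.erase (0 : Fin n)).card : ℝ) = (n : ℝ) - 1 := by
    rw [Finset.card_erase_of_mem (Finset.mem_univ _), Finset.card_univ, Fintype.card_fin]
    have : 1 ≤ n := le_trans (by norm_num) hn
    push_cast [this]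
    ring
  have hsa : ∑ i, t i (a i) = 1 + ((n : ℝ) - 1) * ε := by
    rw [← Finset.add_sum_erase _ _ (Finset.mem_univ (0 : Fin n))]
    have h1 : t 0 (a 0) = 1 := by rw [ha]; simpa using h01
    have h2 : ∑ i ∈ Finset.univ.erase (0 : Fin n), t i (a i)
        = ∑ _i ∈ Finset.univ.erase (0 : Fin n), ε := by
      refine Finset.sum_congr rfl fun i hi' => ?_
      have hne : i ≠ 0 := (Finset.mem_erase.mp hi').1
      rw [ha]; exact (hi i hne).2.1
    rw [h1, h2, Finset.sum_const, nsmul_eq_mul, hcard]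
  have hsi : ∑ i, t i i = (n : ℝ) - ε := by
    rw [← Finset.add_sum_erase _ _ (Finset.mem_univ (0 : Fin n))]
    have h2 : ∑ i ∈ Finset.univ.erase (0 : Fin n), t i i
        = ∑ _i ∈ Finset.univ.erase (0 : Fin n), (1 : ℝ) := by
      refine Finset.sum_congr rfl fun i hi' => (hi i (Finset.mem_erase.mp hi').1).1
    rw [h00, h2, Finset.sum_const, nsmul_eq_mul, hcard]
    ring
  refine ⟨hsa, hsi, Equiv.refl _, ?_⟩
  simp only [Equiv.refl_apply]
  rw [hsa, hsi]
end

section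
/- A directed graph on n ≥ 3 vertices in which every vertex has both out-degree and in-degree at least n−2 and n−2 ≥ n/2 (i.e. n ≥ 4) contains a Hamiltonian directed cycle (instance of the Ghouila-Houri theorem). -/
namespace GH

variable {n : ℕ} {R : Fin n → Fin n → Prop}

/-- cyclic chain condition, indexed form -/
def Cyc (R : Fin n → Fin n → Prop) (l : List (Fin n)) : Prop :=
  ∀ i (h : i < l.length),
    R (l[i]'h) (l[(i+1) % l.length]'(Nat.mod_lt _ (Nat.zero_lt_of_lt h)))

theorem cyc_rotate {l : List (Fin n)} (hc : Cyc R l) (k : ℕ) : Cyc R (l.rotate k) := by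
  intro i hi
  have hm : (l.rotate k).length = l.length := l.length_rotate k
  simp only [List.getElem_rotate]
  have e1 : ((i + 1) % (l.rotate k).length + k) % l.length
      = ((i + k) % l.length + 1) % l.length := by
    rw [hm, Nat.mod_add_mod, Nat.mod_add_mod]
    ring_nf
  simp only [e1]
  exact hc _ _

theorem cyc_append {l : List (Fin n)} (hc : Cyc R l) (hpos : 0 < l.length) (x : Fin n)
    (h1 : R (l[l.length - 1]'(by omega)) x) (h2 : R x (l[0]'hpos)) :
    Cyc R (l ++ [x]) := by
  intro i hi
  have hlen : (l ++ [x]).length = l.length + 1 := by simp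
  rcases lt_trichotomy i (l.length - 1) with h | h | h
  · have e : (i + 1) % (l ++ [x]).length = i + 1 := by
      rw [hlen]; exact Nat.mod_eq_of_lt (by omega)
    simp only [e]
    rw [List.getElem_append_left (by omega), List.getElem_append_left (by omega)]
    have := hc i (by omega)
    have e2 : (i + 1) % l.length = i + 1 := Nat.mod_eq_of_lt (by omega)
    simpa only [e2] using this
  · subst h
    have e : (l.length - 1 + 1) % (l ++ [x]).length = l.length := by
      rw [hlen]; rw [Nat.sub_add_cancel hpos]; exact Nat.mod_eq_of_lt (by omega)
    simp only [e]
    rw [List.getElem_append_left (by omega)]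
    have e2 : (l ++ [x])[l.length]'(by simp) = x := by
      rw [List.getElem_append_right (by omega)]; simp
    rw [e2]; exact h1
  · have hi' : i = l.length := by rw [hlen] at hi; omega
    subst hi'
    have e : (l.length + 1) % (l ++ [x]).length = 0 := by rw [hlen]; simp
    simp only [e]
    have e2 : (l ++ [x])[l.length]'(by simp) = x := by
      rw [List.getElem_append_right (by omega)]; simp
    rw [e2, List.getElem_append_left hpos]
    exact h2

end GH

namespace GH

variable {n : ℕ} {R : Fin n → Fin n → Prop}

/-- at most one bad out / bad in neighbour: find a good insertion position -/
theorem exists_good_pos {l : List (Fin n)} (hnd : l.Nodup) (hlen : 3 ≤ l.length)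
    (x : Fin n) (hx : x ∉ l)
    (hbo : ∀ a b : Fin n, a ≠ x → b ≠ x → ¬ R x a → ¬ R x b → a = b)
    (hbi : ∀ a b : Fin n, a ≠ x → b ≠ x → ¬ R a x → ¬ R b x → a = b) :
    ∃ (j : ℕ) (hj : j < l.length), R (l[j]'hj) x ∧
      R x (l[(j+1) % l.length]'(Nat.mod_lt _ (by omega))) := by
  by_contra hcon
  push_neg at hcon
  have hne : ∀ (j : ℕ) (hj : j < l.length), l[j]'hj ≠ x := fun j hj h =>
    hx (h ▸ List.getElem_mem hj)
  -- type-1 badness: ¬ R l[j] x  determines j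
  have T1 : ∀ (j j' : ℕ) (hj : j < l.length) (hj' : j' < l.length),
      ¬ R (l[j]'hj) x → ¬ R (l[j']'hj') x → j = j' := by
    intro j j' hj hj' h h'
    have := hbi _ _ (hne j hj) (hne j' hj') h h'
    exact (List.Nodup.getElem_inj_iff hnd).mp this
  have T2 : ∀ (j j' : ℕ) (hj : j < l.length) (hj' : j' < l.length),
      ¬ R x (l[(j+1) % l.length]'(Nat.mod_lt _ (by omega))) →
      ¬ R x (l[(j'+1) % l.length]'(Nat.mod_lt _ (by omega))) → j = j' := by
    intro j j' hj hj' h h'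
    have heq := hbo _ _ (hne _ _) (hne _ _) h h'
    have hidx : (j+1) % l.length = (j'+1) % l.length :=
      (List.Nodup.getElem_inj_iff hnd).mp heq
    have m1 : (j+1) % l.length = if j + 1 = l.length then 0 else j + 1 := by
      split_ifs with h0
      · rw [h0, Nat.mod_self]
      · exact Nat.mod_eq_of_lt (by omega)
    have m2 : (j'+1) % l.length = if j' + 1 = l.length then 0 else j' + 1 := by
      split_ifs with h0
      · rw [h0, Nat.mod_self]
      · exact Nat.mod_eq_of_lt (by omega)
    rw [m1, m2] at hidx
    split_ifs at hidx <;> omega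
  have b0 := hcon 0 (by omega)
  have b1 := hcon 1 (by omega)
  have b2 := hcon 2 (by omega)
  rw [imp_iff_not_or] at b0 b1 b2
  rcases b0 with b0 | b0 <;> rcases b1 with b1 | b1 <;> rcases b2 with b2 | b2
  · exact absurd (T1 0 1 (by omega) (by omega) b0 b1) (by omega)
  · exact absurd (T1 0 1 (by omega) (by omega) b0 b1) (by omega)
  · exact absurd (T1 0 2 (by omega) (by omega) b0 b2) (by omega)
  · exact absurd (T2 1 2 (by omega) (by omega) b1 b2) (by omega)
  · exact absurd (T1 1 2 (by omega) (by omega) b1 b2) (by omega)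
  · exact absurd (T2 0 2 (by omega) (by omega) b0 b2) (by omega)
  · exact absurd (T2 0 1 (by omega) (by omega) b0 b1) (by omega)
  · exact absurd (T2 0 1 (by omega) (by omega) b0 b1) (by omega)

/-- insertion step -/
theorem insert_step {l : List (Fin n)} (hnd : l.Nodup) (hc : Cyc R l) (hlen : 3 ≤ l.length)
    (x : Fin n) (hx : x ∉ l)
    (hbo : ∀ a b : Fin n, a ≠ x → b ≠ x → ¬ R x a → ¬ R x b → a = b)
    (hbi : ∀ a b : Fin n, a ≠ x → b ≠ x → ¬ R a x → ¬ R b x → a = b) :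
    ∃ l' : List (Fin n), l'.Nodup ∧ Cyc R l' ∧ l'.length = l.length + 1 ∧
      ∀ v, v ∈ l' ↔ v ∈ l ∨ v = x := by
  obtain ⟨j, hj, hjx, hxj⟩ := exists_good_pos hnd hlen x hx hbo hbi
  refine ⟨l.rotate (j+1) ++ [x], ?_, ?_, by simp, ?_⟩
  · rw [List.nodup_append]
    refine ⟨List.nodup_rotate.mpr hnd, List.nodup_singleton x, ?_⟩
    intro a ha b hb
    simp only [List.mem_singleton] at hb
    rintro rfl; subst hb; exact hx (List.mem_rotate.mp ha)
  · have hpos : 0 < (l.rotate (j+1)).length := by rw [List.length_rotate]; omega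
    refine cyc_append (cyc_rotate hc (j+1)) hpos x ?_ ?_
    · simp only [List.getElem_rotate]
      have hm : (l.rotate (j+1)).length = l.length := l.length_rotate _
      have e : ((l.rotate (j+1)).length - 1 + (j+1)) % l.length = j := by
        rw [hm]
        have : l.length - 1 + (j + 1) = l.length + j := by omega
        rw [this, Nat.add_mod_left, Nat.mod_eq_of_lt hj]
      simp only [e]
      exact hjx
    · rw [List.getElem_rotate]
      have e : (0 + (j+1)) % l.length = (j + 1) % l.length := by rw [Nat.zero_add]
      simpa only [e] using hxj
  · intro v
    simp only [List.mem_append, List.mem_rotate, List.mem_singleton]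

end GH

namespace GH

variable {n : ℕ} {R : Fin n → Fin n → Prop}

theorem grow
    (hbo : ∀ x a b : Fin n, a ≠ x → b ≠ x → ¬ R x a → ¬ R x b → a = b)
    (hbi : ∀ x a b : Fin n, a ≠ x → b ≠ x → ¬ R a x → ¬ R b x → a = b) :
    ∀ (k : ℕ) (l : List (Fin n)), l.Nodup → Cyc R l → 3 ≤ l.length → l.length + k = n →
      ∃ l' : List (Fin n), l'.Nodup ∧ Cyc R l' ∧ l'.length = n := by
  intro k
  induction k with
  | zero => intro l hnd hc h3 hlen; exact ⟨l, hnd, hc, by omega⟩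
  | succ k ih =>
    intro l hnd hc h3 hlen
    have hex : ∃ x : Fin n, x ∉ l := by
      by_contra h
      push_neg at h
      have hsub : (Finset.univ : Finset (Fin n)) ⊆ l.toFinset :=
        fun v _ => List.mem_toFinset.mpr (h v)
      have := Finset.card_le_card hsub
      rw [Finset.card_univ, Fintype.card_fin, List.toFinset_card_of_nodup hnd] at this
      omega
    obtain ⟨x, hx⟩ := hex
    obtain ⟨l', hnd', hc', hlen', _⟩ := insert_step hnd hc h3 x hx (hbo x) (hbi x)
    exact ih l' hnd' hc' (by omega) (by omega)

theorem finalize (hn2 : 2 ≤ n) (l : List (Fin n)) (hnd : l.Nodup) (hc : Cyc R l)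
    (hlen : l.length = n) :
    ∃ σ : Equiv.Perm (Fin n), σ.IsCycle ∧ σ.support = Finset.univ ∧ ∀ v, R v (σ v) := by
  have hall : ∀ v : Fin n, v ∈ l := by
    have hcard : l.toFinset.card = n := by
      rw [List.toFinset_card_of_nodup hnd, hlen]
    have : l.toFinset = Finset.univ :=
      Finset.eq_univ_of_card _ (by simp [hcard])
    intro v
    rw [← List.mem_toFinset, this]
    exact Finset.mem_univ v
  refine ⟨l.formPerm, List.isCycle_formPerm hnd (by omega), ?_, ?_⟩
  · rw [List.support_formPerm_of_nodup l hnd]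
    · apply Finset.eq_univ_of_forall
      intro v
      rw [List.mem_toFinset]
      exact hall v
    · intro x hxx
      rw [hxx] at hlen
      simp at hlen
      omega
  · intro v
    obtain ⟨i, hi⟩ := List.get_of_mem (hall v)
    rw [← hi, List.formPerm_apply_mem_eq_next hnd _ (List.get_mem _ _)]
    simp only [List.get_eq_getElem]
    rw [List.next_getElem l hnd i i.isLt]
    have := hc i i.isLt
    simpa [List.get_eq_getElem] using this

theorem four_bool :
    ∀ p01 p02 p03 p10 p12 p13 p20 p21 p23 p30 p31 p32 : Bool,
    ((p01 || p02) && (p01 || p03) && (p02 || p03) &&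
     (p10 || p12) && (p10 || p13) && (p12 || p13) &&
     (p20 || p21) && (p20 || p23) && (p21 || p23) &&
     (p30 || p31) && (p30 || p32) && (p31 || p32) &&
     (p10 || p20) && (p10 || p30) && (p20 || p30) &&
     (p01 || p21) && (p01 || p31) && (p21 || p31) &&
     (p02 || p12) && (p02 || p32) && (p12 || p32) &&
     (p03 || p13) && (p03 || p23) && (p13 || p23)) = true →
    ((p01 && p12 && p23 && p30) ||
     (p01 && p13 && p32 && p20) ||
     (p02 && p21 && p13 && p30) ||
     (p02 && p23 && p31 && p10) ||
     (p03 && p31 && p12 && p20) ||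
     (p03 && p32 && p21 && p10)) = true := by
  decide

end GH

/-- Ghouila-Houri instance: a loopless digraph on n ≥ 4 vertices with all out- and
    in-degrees at least n−2 contains a Hamiltonian directed cycle. -/
theorem stmt_18 (n : ℕ) (hn : 4 ≤ n) (R : Fin n → Fin n → Prop) [DecidableRel R]
    (hirr : ∀ v, ¬ R v v)
    (hout : ∀ v : Fin n, n - 2 ≤ (Finset.univ.filter (fun w => R v w)).card)
    (hin : ∀ v : Fin n, n - 2 ≤ (Finset.univ.filter (fun w => R w v)).card) :
    ∃ σ : Equiv.Perm (Fin n), σ.IsCycle ∧ σ.support = Finset.univ ∧ ∀ v, R v (σ v) := by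
  have hbo : ∀ x a b : Fin n, a ≠ x → b ≠ x → ¬R x a → ¬R x b → a = b := by
    intro x a b ha hb hra hrb
    by_contra hab
    have hsub : Finset.univ.filter (fun w => R x w) ⊆ Finset.univ \ {x, a, b} := by
      intro w hw
      simp only [Finset.mem_filter, Finset.mem_univ, true_and] at hw
      simp only [Finset.mem_sdiff, Finset.mem_univ, Finset.mem_insert, Finset.mem_singleton,
        true_and]
      push_neg
      refine ⟨?_, ?_, ?_⟩ <;> rintro rfl
      · exact hirr _ hw
      · exact hra hw
      · exact hrb hw
    have h3 : ({x, a, b} : Finset (Fin n)).card = 3 :=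
      Finset.card_eq_three.mpr ⟨x, a, b, Ne.symm ha, Ne.symm hb, hab, rfl⟩
    have hcard := Finset.card_le_card hsub
    rw [Finset.card_sdiff_of_subset (Finset.subset_univ _), h3, Finset.card_univ, Fintype.card_fin] at hcard
    have := hout x
    omega
  have hbi : ∀ x a b : Fin n, a ≠ x → b ≠ x → ¬R a x → ¬R b x → a = b := by
    intro x a b ha hb hra hrb
    by_contra hab
    have hsub : Finset.univ.filter (fun w => R w x) ⊆ Finset.univ \ {x, a, b} := by
      intro w hw
      simp only [Finset.mem_filter, Finset.mem_univ, true_and] at hw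
      simp only [Finset.mem_sdiff, Finset.mem_univ, Finset.mem_insert, Finset.mem_singleton,
        true_and]
      push_neg
      refine ⟨?_, ?_, ?_⟩ <;> rintro rfl
      · exact hirr _ hw
      · exact hra hw
      · exact hrb hw
    have h3 : ({x, a, b} : Finset (Fin n)).card = 3 :=
      Finset.card_eq_three.mpr ⟨x, a, b, Ne.symm ha, Ne.symm hb, hab, rfl⟩
    have hcard := Finset.card_le_card hsub
    rw [Finset.card_sdiff_of_subset (Finset.subset_univ _), h3, Finset.card_univ, Fintype.card_fin] at hcard
    have := hin x
    omega
  obtain h4 | h5 : n = 4 ∨ 5 ≤ n := by omega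
  · subst h4
    have hout2 : ∀ v a b : Fin 4, a ≠ v → b ≠ v → a ≠ b → R v a ∨ R v b := by
      intro v a b ha hb hab
      by_contra h
      push_neg at h
      exact hab (hbo v a b ha hb h.1 h.2)
    have hin2 : ∀ v a b : Fin 4, a ≠ v → b ≠ v → a ≠ b → R a v ∨ R b v := by
      intro v a b ha hb hab
      by_contra h
      push_neg at h
      exact hab (hbi v a b ha hb h.1 h.2)
    have mk : ∀ a b c d : Fin 4, [a,b,c,d].Nodup → R a b → R b c → R c d → R d a →
        ∃ σ : Equiv.Perm (Fin 4), σ.IsCycle ∧ σ.support = Finset.univ ∧ ∀ v, R v (σ v) := by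
      intro a b c d nd r1 r2 r3 r4
      refine GH.finalize (n := 4) (by omega) [a,b,c,d] nd ?_ (by simp)
      intro i hi
      simp only [List.length_cons, List.length_nil] at hi
      interval_cases i
      · simpa using r1
      · simpa using r2
      · simpa using r3
      · simpa using r4
    have key := GH.four_bool (decide (R 0 1)) (decide (R 0 2)) (decide (R 0 3))
      (decide (R 1 0)) (decide (R 1 2)) (decide (R 1 3))
      (decide (R 2 0)) (decide (R 2 1)) (decide (R 2 3))
      (decide (R 3 0)) (decide (R 3 1)) (decide (R 3 2))
      (by
        simp only [Bool.and_eq_true, Bool.or_eq_true, decide_eq_true_eq]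
        repeat' apply And.intro
        all_goals
          first
          | exact hout2 _ _ _ (by decide) (by decide) (by decide)
          | exact hin2 _ _ _ (by decide) (by decide) (by decide))
    simp only [Bool.or_eq_true, Bool.and_eq_true, decide_eq_true_eq, or_assoc, and_assoc] at key
    rcases key with ⟨k1,k2,k3,k4⟩ | ⟨k1,k2,k3,k4⟩ | ⟨k1,k2,k3,k4⟩ | ⟨k1,k2,k3,k4⟩ |
      ⟨k1,k2,k3,k4⟩ | ⟨k1,k2,k3,k4⟩
    · exact mk 0 1 2 3 (by decide) k1 k2 k3 k4
    · exact mk 0 1 3 2 (by decide) k1 k2 k3 k4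
    · exact mk 0 2 1 3 (by decide) k1 k2 k3 k4
    · exact mk 0 2 3 1 (by decide) k1 k2 k3 k4
    · exact mk 0 3 1 2 (by decide) k1 k2 k3 k4
    · exact mk 0 3 2 1 (by decide) k1 k2 k3 k4
  · -- n ≥ 5 : build a triangle, then grow
    set a : Fin n := ⟨0, by omega⟩ with ha_def
    obtain ⟨b, hb⟩ : ∃ b, R a b := by
      have h := hout a
      have hpos : 0 < (Finset.univ.filter (fun w => R a w)).card := by omega
      obtain ⟨b, hbm⟩ := Finset.card_pos.mp hpos
      exact ⟨b, (Finset.mem_filter.mp hbm).2⟩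
    obtain ⟨c, hbc, hca⟩ : ∃ c, R b c ∧ R c a := by
      have h1 := hout b
      have h2 := hin a
      have hun : (Finset.univ.filter (fun w => R b w) ∪ Finset.univ.filter (fun w => R w a)).card ≤ n := by
        have := Finset.card_le_univ
          (Finset.univ.filter (fun w => R b w) ∪ Finset.univ.filter (fun w => R w a))
        simpa using this
      have hint := Finset.card_union_add_card_inter
        (Finset.univ.filter (fun w => R b w)) (Finset.univ.filter (fun w => R w a))
      have hpos : 0 < ((Finset.univ.filter (fun w => R b w)) ∩
          (Finset.univ.filter (fun w => R w a))).card := by omega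
      obtain ⟨c, hc⟩ := Finset.card_pos.mp hpos
      rw [Finset.mem_inter, Finset.mem_filter, Finset.mem_filter] at hc
      exact ⟨c, hc.1.2, hc.2.2⟩
    have hab : a ≠ b := by rintro rfl; exact hirr _ hb
    have hbc' : b ≠ c := by rintro rfl; exact hirr _ hbc
    have hca' : c ≠ a := by rintro rfl; exact hirr _ hca
    have nd : [a,b,c].Nodup := by
      simp only [List.nodup_cons, List.mem_cons, List.mem_singleton, List.not_mem_nil,
        not_false_iff, List.nodup_nil, and_true, not_or]
      exact ⟨⟨hab, Ne.symm hca'⟩, hbc'⟩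
    have hcyc : GH.Cyc R [a,b,c] := by
      intro i hi
      simp only [List.length_cons, List.length_nil] at hi
      interval_cases i
      · simpa using hb
      · simpa using hbc
      · simpa using hca
    obtain ⟨l, hnd, hc, hlen⟩ := GH.grow hbo hbi (n-3) [a,b,c] nd hcyc (by simp)
      (by simp; omega)
    exact GH.finalize (by omega) l hnd hc hlen
end

section
/- Rearrangement claim for distinct matchings: given two distinct permutations a', â of [n] (n ≥ 4), there exist relabelings (permutations) of the agents and houses under which a' becomes the cyclic shift i ↦ (i mod n)+1, â satisfies â(i) ≠ i for all i, and â(1) ≠ 2. -/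
open Equiv List

namespace Stmt19Aux

/-- Cyclic validity of a list w.r.t. a map `f`: the image of an entry is never the
cyclically next entry. -/
def Good {α : Type*} (f : α → α) (q : List α) : Prop :=
  ∀ (i : ℕ) (h : i < q.length),
    f (q[i]'h) ≠ q[(i + 1) % q.length]'(Nat.mod_lt _ (Nat.lt_of_le_of_lt (Nat.zero_le i) h))

lemma getElem_idx_congr {α : Type*} (q : List α) {i j : ℕ} (h : i = j) (hi : i < q.length) :
    q[i]'hi = q[j]'(h ▸ hi) := by subst h; rfl

lemma Good.rotate {α : Type*} {f : α → α} {q : List α} (hq : Good f q) (j : ℕ) :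
    Good f (q.rotate j) := by
  intro i h
  have hlen : (q.rotate j).length = q.length := q.length_rotate j
  have hk : 0 < q.length := by omega
  rw [List.getElem_rotate, List.getElem_rotate]
  have h2 : ((i + 1) % (q.rotate j).length + j) % q.length
      = ((i + j) % q.length + 1) % q.length := by
    rw [hlen, Nat.mod_add_mod, Nat.mod_add_mod, Nat.add_right_comm]
  rw [getElem_idx_congr q h2]
  exact hq ((i + j) % q.length) (Nat.mod_lt _ hk)

lemma insert_step {n : ℕ} (σ : Equiv.Perm (Fin n)) {q : List (Fin n)} (hg : Good σ q)
    (hnd : q.Nodup) (h3 : 3 ≤ q.length) {p : Fin n} (hp : p ∉ q) :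
    ∃ q' : List (Fin n), Good σ q' ∧ q'.Nodup ∧ q'.length = q.length + 1 := by
  set k := q.length with hkdef
  have hk0 : 0 < k := by omega
  have inj : ∀ (i j : ℕ) (hi : i < k) (hj : j < k), q[i]'hi = q[j]'hj → i = j := by
    intro i j hi hj hij
    exact (List.Nodup.getElem_inj_iff hnd).mp hij
  have hmod0 : (k - 1 + 0) % k = k - 1 := by
    rw [Nat.add_zero]; exact Nat.mod_eq_of_lt (by omega)
  have hmod1 : (k - 1 + 1) % k = 0 := by
    have h : k - 1 + 1 = k := by omega
    rw [h, Nat.mod_self]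
  have hmod2 : (k - 1 + 2) % k = 1 := by
    have h : k - 1 + 2 = k + 1 := by omega
    rw [h, Nat.add_mod_left]
    exact Nat.mod_eq_of_lt (by omega)
  -- find a good rotation amount j ∈ {0, 1, 2}
  have hexj : ∃ (j : ℕ) (hj : j < k), q[j]'hj ≠ σ p ∧
      q[(k - 1 + j) % k]'(Nat.mod_lt _ hk0) ≠ σ⁻¹ p := by
    by_contra hcon
    push_neg at hcon
    have d0 := hcon 0 (by omega)
    have d1 := hcon 1 (by omega)
    have d2 := hcon 2 (by omega)
    rw [getElem_idx_congr q hmod0] at d0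
    rw [getElem_idx_congr q hmod1] at d1
    rw [getElem_idx_congr q hmod2] at d2
    by_cases hA0 : q[0]'(by omega) = σ p
    · by_cases hA1 : q[1]'(by omega) = σ p
      · have := inj 0 1 (by omega) (by omega) (hA0.trans hA1.symm); omega
      · have hB1 := d1 hA1
        by_cases hA2 : q[2]'(by omega) = σ p
        · have := inj 0 2 (by omega) (by omega) (hA0.trans hA2.symm); omega
        · have hB2 := d2 hA2
          have := inj 0 1 (by omega) (by omega) (hB1.trans hB2.symm); omega
    · have hB0 := d0 hA0
      by_cases hA1 : q[1]'(by omega) = σ p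
      · by_cases hA2 : q[2]'(by omega) = σ p
        · have := inj 1 2 (by omega) (by omega) (hA1.trans hA2.symm); omega
        · have hB2 := d2 hA2
          have := inj (k - 1) 1 (by omega) (by omega) (hB0.trans hB2.symm); omega
      · have hB1 := d1 hA1
        have := inj (k - 1) 0 (by omega) (by omega) (hB0.trans hB1.symm); omega
  obtain ⟨j, hj, hA, hB⟩ := hexj
  refine ⟨p :: q.rotate j, ?_, ?_, by simp [hkdef]⟩
  · -- Good
    intro i h
    have hr : (q.rotate j).length = k := by simp [hkdef]
    have hgr := hg.rotate j
    have hlen' : (p :: q.rotate j).length = k + 1 := by simp [hkdef]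
    rcases i with _ | i
    · -- i = 0
      have h1 : (0 + 1) % (p :: q.rotate j).length = 1 := by
        rw [hlen']; exact Nat.mod_eq_of_lt (by omega)
      rw [getElem_idx_congr _ h1]
      simp only [List.getElem_cons_zero, List.getElem_cons_succ]
      rw [List.getElem_rotate]
      have h2 : (0 + j) % q.length = j := by
        rw [Nat.zero_add]; exact Nat.mod_eq_of_lt hj
      rw [getElem_idx_congr q h2]
      exact fun hc => hA hc.symm
    · have hik : i + 1 < k + 1 := by omega
      by_cases hlast : i + 1 = k
      · -- last position
        have h1 : (i + 1 + 1) % (p :: q.rotate j).length = 0 := by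
          rw [hlen', hlast, Nat.mod_self]
        rw [getElem_idx_congr _ h1]
        simp only [List.getElem_cons_zero, List.getElem_cons_succ]
        rw [List.getElem_rotate]
        have h2 : (i + j) % q.length = (k - 1 + j) % k := by
          congr 1; omega
        rw [getElem_idx_congr q h2]
        intro hc
        apply hB
        rw [← hc, Equiv.Perm.inv_def, Equiv.symm_apply_apply]
      · -- middle position
        have hi' : i + 1 < k := by omega
        have h1 : (i + 1 + 1) % (p :: q.rotate j).length = i + 2 := by
          rw [hlen']; exact Nat.mod_eq_of_lt (by omega)
        rw [getElem_idx_congr _ h1]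
        simp only [List.getElem_cons_succ]
        have h2 : (i + 1) % (q.rotate j).length = i + 1 := by
          rw [hr]; exact Nat.mod_eq_of_lt hi'
        have := hgr i (by omega)
        rw [getElem_idx_congr _ h2] at this
        exact this
  · -- Nodup
    rw [List.nodup_cons]
    exact ⟨fun hc => hp (List.mem_rotate.mp hc), List.nodup_rotate.mpr hnd⟩

lemma fresh {n : ℕ} (s : Finset (Fin n)) (h : s.card < n) : ∃ x, x ∉ s := by
  have hc : sᶜ.Nonempty := by
    rw [← Finset.card_pos, Finset.card_compl]
    simp only [Fintype.card_fin]
    omega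
  obtain ⟨x, hx⟩ := hc
  exact ⟨x, Finset.mem_compl.mp hx⟩

lemma grow {n : ℕ} (σ : Equiv.Perm (Fin n)) :
    ∀ (m : ℕ) (q : List (Fin n)), Good σ q → q.Nodup → 3 ≤ q.length → q.length + m = n →
    ∃ Q : List (Fin n), Good σ Q ∧ Q.Nodup ∧ Q.length = n := by
  intro m
  induction m with
  | zero => intro q hg hnd _ hlen; exact ⟨q, hg, hnd, by omega⟩
  | succ m ih =>
    intro q hg hnd h3 hlen
    obtain ⟨p, hp⟩ : ∃ p : Fin n, p ∉ q := by
      obtain ⟨p, hp⟩ := fresh q.toFinset (by rw [List.toFinset_card_of_nodup hnd]; omega)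
      exact ⟨p, fun hc => hp (List.mem_toFinset.mpr hc)⟩
    obtain ⟨q', hg', hnd', hlen'⟩ := insert_step σ hg hnd h3 hp
    exact ih q' hg' hnd' (by omega) (by omega)

lemma base {n : ℕ} (hn : 5 ≤ n) (σ : Equiv.Perm (Fin n)) :
    ∃ q : List (Fin n), Good σ q ∧ q.Nodup ∧ q.length = 3 := by
  set u : Fin n := ⟨0, by omega⟩ with hu
  obtain ⟨v, hv⟩ := fresh {u, σ u} (by
    have h1 := Finset.card_insert_le u ({σ u} : Finset (Fin n))
    simp only [Finset.card_singleton] at h1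
    omega)
  obtain ⟨w, hw⟩ := fresh {u, v, σ v, σ⁻¹ u} (by
    have h1 := Finset.card_insert_le u ({v, σ v, σ⁻¹ u} : Finset (Fin n))
    have h2 := Finset.card_insert_le v ({σ v, σ⁻¹ u} : Finset (Fin n))
    have h3 := Finset.card_insert_le (σ v) ({σ⁻¹ u} : Finset (Fin n))
    simp only [Finset.card_singleton] at h1 h2 h3
    omega)
  simp only [Finset.mem_insert, Finset.mem_singleton, not_or] at hv hw
  obtain ⟨hvu, hvsu⟩ := hv
  obtain ⟨hwu, hwv, hwsv, hwsiu⟩ := hw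
  refine ⟨[u, v, w], ?_, ?_, rfl⟩
  · intro i h
    simp only [List.length_cons, List.length_nil] at h
    interval_cases i
    · exact fun hc => hvsu ((show σ u = v from hc).symm)
    · exact fun hc => hwsv ((show σ v = w from hc).symm)
    · have h0 : (2 + 1) % ([u, v, w] : List (Fin n)).length = 0 := by norm_num
      rw [getElem_idx_congr _ h0]
      simp only [List.getElem_cons_succ, List.getElem_cons_zero]
      intro hc
      apply hwsiu
      rw [← hc, Equiv.Perm.inv_def, Equiv.symm_apply_apply]
  · refine List.nodup_cons.mpr ⟨?_, List.nodup_cons.mpr ⟨?_, ?_⟩⟩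
    · simp only [List.mem_cons, List.not_mem_nil, or_false]
      push_neg
      exact ⟨fun h => hvu h.symm, fun h => hwu h.symm⟩
    · simp only [List.mem_cons, List.not_mem_nil, or_false]
      exact fun h => hwv h.symm
    · simp

set_option maxRecDepth 10000 in
lemma KL4 : ∀ σ : Equiv.Perm (Fin 4), ∃ u : Equiv.Perm (Fin 4),
    ∀ y, u (finRotate 4 (u⁻¹ y)) ≠ σ y := by decide

lemma KL {n : ℕ} (hn : 4 ≤ n) (σ : Equiv.Perm (Fin n)) :
    ∃ u : Equiv.Perm (Fin n), ∀ y, u (finRotate n (u⁻¹ y)) ≠ σ y := by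
  rcases eq_or_lt_of_le hn with h4 | h5
  · subst h4; exact KL4 σ
  · obtain ⟨q, hg, hnd, hq3⟩ := base h5 σ
    obtain ⟨Q, hG, hND, hQ⟩ := grow σ (n - 3) q hg hnd (by omega) (by omega)
    have hall : ∀ y : Fin n, y ∈ Q := by
      have huniv : Q.toFinset = Finset.univ := by
        apply Finset.eq_univ_of_card
        rw [List.toFinset_card_of_nodup hND, hQ]
        simp
      intro y
      rw [← List.mem_toFinset, huniv]
      exact Finset.mem_univ y
    have hcyc : Q.formPerm.IsCycle := List.isCycle_formPerm hND (by omega)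
    have hsupp : Q.formPerm.support = Finset.univ := by
      rw [List.support_formPerm_of_nodup Q hND (fun x hx => by
        have := congrArg List.length hx; simp at this; omega)]
      apply Finset.eq_univ_of_card
      rw [List.toFinset_card_of_nodup hND, hQ]
      simp
    have hconj : IsConj (finRotate n) Q.formPerm := by
      refine (isCycle_finRotate_of_le (by omega)).isConj hcyc ?_
      rw [support_finRotate_of_le (by omega), hsupp]
    obtain ⟨g, hg'⟩ := isConj_iff.mp hconj
    refine ⟨g, fun y => ?_⟩
    have hgy : g (finRotate n (g⁻¹ y)) = Q.formPerm y := by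
      have h := congrArg (fun (e : Equiv.Perm (Fin n)) => e y) hg'
      simpa [Equiv.Perm.mul_apply] using h
    rw [hgy]
    obtain ⟨i, hi, rfl⟩ := List.mem_iff_getElem.mp (hall y)
    rw [List.formPerm_apply_getElem Q hND i hi]
    exact (hG i hi).symm

end Stmt19Aux

/-- Rearrangement claim for distinct matchings: two distinct permutations a', â of [n]
    (n ≥ 4) can be relabeled (agents by π, houses by τ) so that a' becomes the cyclic
    shift i ↦ i+1, while the relabeled â has no fixed point and sends 0 somewhere
    other than 1. -/
theorem stmt_19 (n : ℕ) [NeZero n] (hn : 4 ≤ n)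
    (a' ahat : Equiv.Perm (Fin n)) (hne : a' ≠ ahat) :
    ∃ π τ : Equiv.Perm (Fin n),
      (∀ i : Fin n, τ (a' (π.symm i)) = i + 1) ∧
      (∀ i : Fin n, τ (ahat (π.symm i)) ≠ i) ∧
      τ (ahat (π.symm 0)) ≠ 1 := by
  obtain ⟨m, rfl⟩ : ∃ m, n = m + 1 := ⟨n - 1, (Nat.succ_pred_eq_of_pos (NeZero.pos n)).symm⟩
  set c : Equiv.Perm (Fin (m + 1)) := finRotate (m + 1) with hcdef
  have hc : ∀ i : Fin (m + 1), c i = i + 1 := fun i => finRotate_succ_apply i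
  set σ : Equiv.Perm (Fin (m + 1)) := a'⁻¹ * ahat with hσdef
  have hσapp : ∀ x, σ x = a'.symm (ahat x) := fun x => rfl
  have hσ1 : σ ≠ 1 := by
    intro h
    refine hne (Equiv.ext fun x => ?_)
    have hx : σ x = x := by rw [h]; rfl
    rw [hσapp] at hx
    calc a' x = a' (a'.symm (ahat x)) := by rw [hx]
    _ = ahat x := a'.apply_symm_apply _
  obtain ⟨z, hz⟩ : ∃ z, σ z ≠ z := by
    by_contra h
    push_neg at h
    exact hσ1 (Equiv.ext h)
  obtain ⟨u₀, H₀⟩ := Stmt19Aux.KL hn σ⁻¹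
  set k : Fin (m + 1) := u₀⁻¹ z with hkdef
  set u : Equiv.Perm (Fin (m + 1)) := u₀ * Equiv.addRight k with hudef
  have hu0 : u 0 = z := by
    simp only [hudef, Equiv.Perm.mul_apply, Equiv.coe_addRight, zero_add, hkdef]
    exact Equiv.apply_symm_apply u₀ z
  have hcomm : ∀ w, Equiv.addRight k (c ((Equiv.addRight k)⁻¹ w)) = c w := by
    intro w
    have hinv : (Equiv.addRight k)⁻¹ w = w - k := by
      have : (Equiv.addRight k)⁻¹ = (Equiv.addRight k).symm := rfl
      rw [this, Equiv.addRight_symm, Equiv.coe_addRight, sub_eq_add_neg]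
    rw [hinv, hc, hc, Equiv.coe_addRight]
    abel
  have H : ∀ y, u (c (u⁻¹ y)) ≠ σ⁻¹ y := by
    intro y
    have hrw : u (c (u⁻¹ y)) = u₀ (c (u₀⁻¹ y)) := by
      simp only [hudef, mul_inv_rev, Equiv.Perm.mul_apply]
      rw [hcomm]
    rw [hrw]
    exact H₀ y
  refine ⟨u.symm, a'.symm.trans (u.symm.trans c), ?_, ?_, ?_⟩
  · intro i
    simp only [Equiv.symm_symm, Equiv.trans_apply, Equiv.symm_apply_apply]
    exact hc i
  · intro i heq
    simp only [Equiv.symm_symm, Equiv.trans_apply] at heq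
    have heq' : c (u⁻¹ (σ (u i))) = i := heq
    exact H (σ (u i)) (by rw [heq', Equiv.Perm.inv_def, Equiv.symm_apply_apply])
  · intro heq
    simp only [Equiv.symm_symm, Equiv.trans_apply] at heq
    have h1 : (1 : Fin (m + 1)) = c 0 := by rw [hc, zero_add]
    rw [h1] at heq
    have h2 : u.symm (a'.symm (ahat (u 0))) = 0 := c.injective heq
    rw [← hσapp, hu0] at h2
    apply hz
    have : σ z = u 0 := by
      rw [← h2]
      exact (u.apply_symm_apply _).symm
    rw [this, hu0]
end
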